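/- Let ρ > 0, let b, σ, f : ℝ_{>0} → ℝ be C¹ with σ > 0, f' > 0 strictly decreasing, b concave on ℝ_{>0}, and ρ > sup b'. Let u ∈ C²((a,∞)) satisfy ρu = b u' + (σ²/2) u'' + f on (a,∞), with u''' existing (u'' differentiable). If x₀ ∈ (a,∞) is a local minimum point of u', then u'(x₀) > 0. -/
import Mathlib

open Filter Set

theorem stmt_11 (a ρ : ℝ) (ha : 0 ≤ a) (hρ : 0 < ρ)
    (b b' σ f f' : ℝ → ℝ)
    (hb : ∀ x > (0:ℝ), HasDerivAt b (b' x) x)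
    (hb'cont : ContinuousOn b' (Set.Ioi (0:ℝ)))
    (hσpos : ∀ x > (0:ℝ), 0 < σ x)
    (hσcont : ContinuousOn σ (Set.Ioi (0:ℝ)))
    (hf : ∀ x > (0:ℝ), HasDerivAt f (f' x) x)
    (hf'pos : ∀ x > (0:ℝ), 0 < f' x)
    (hf'anti : StrictAntiOn f' (Set.Ioi (0:ℝ)))
    (hρb : ∀ x > (0:ℝ), b' x < ρ)
    (u u' u'' u''' : ℝ → ℝ)
    (hu : ∀ x ∈ Set.Ioi a, HasDerivAt u (u' x) x)
    (hu' : ∀ x ∈ Set.Ioi a, HasDerivAt u' (u'' x) x)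
    (hu'' : ∀ x ∈ Set.Ioi a, HasDerivAt u'' (u''' x) x)
    (hode : ∀ x ∈ Set.Ioi a,
      ρ * u x = b x * u' x + (1 / 2) * (σ x) ^ 2 * u'' x + f x)
    (x₀ : ℝ) (hx₀ : x₀ ∈ Set.Ioi a) (hmin : IsLocalMin u' x₀) :
    0 < u' x₀ := by
  have x₀a : a < x₀ := hx₀
  have x₀pos : 0 < x₀ := lt_of_le_of_lt ha x₀a
  have hu''0 : u'' x₀ = 0 := hmin.hasDerivAt_eq_zero (hu' x₀ hx₀)
  -- Step 2 : u''' x₀ ≥ 0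
  have h3 : 0 ≤ u''' x₀ := by
    by_contra hneg
    push_neg at hneg
    have hslope := hasDerivAt_iff_tendsto_slope.mp (hu'' x₀ hx₀)
    have hr : Tendsto (slope u'' x₀) (nhdsWithin x₀ (Ioi x₀)) (nhds (u''' x₀)) :=
      hslope.mono_left (nhdsWithin_mono _ (fun x hx => ne_of_gt hx))
    have hev : ∀ᶠ x in nhdsWithin x₀ (Ioi x₀), slope u'' x₀ x < 0 :=
      hr.eventually_lt_const hneg
    have hev2 : ∀ᶠ x in nhdsWithin x₀ (Ioi x₀), u' x₀ ≤ u' x :=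
      (hmin.filter_mono nhdsWithin_le_nhds)
    have hev3 : ∀ᶠ x in nhdsWithin x₀ (Ioi x₀), x ∈ Ioi a :=
      eventually_nhdsWithin_of_eventually_nhds (Ioi_mem_nhds x₀a)
    obtain ⟨s, hs, hsub⟩ := (hev.and (hev2.and hev3)).exists_mem
    obtain ⟨y, hy, hysub⟩ := mem_nhdsGT_iff_exists_Ioo_subset.mp hs
    set z := (x₀ + y) / 2 with hz
    have hzmem : z ∈ Ioo x₀ y := by constructor <;> simp only [hz] <;> linarith [mem_Ioi.mp hy]
    have hIoo : ∀ x ∈ Ioo x₀ z, u'' x < 0 := by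
      intro x hx
      have hxmem : x ∈ Ioo x₀ y := ⟨hx.1, lt_trans hx.2 hzmem.2⟩
      have := (hsub x (hysub hxmem)).1
      have hxx : x₀ < x := hx.1
      rw [slope_def_field, hu''0] at this
      have hpos : 0 < x - x₀ := by linarith
      have := (div_neg_iff).mp (by simpa using this)
      rcases this with ⟨_, h⟩ | ⟨h, _⟩
      · linarith
      · linarith
    have hanti : StrictAntiOn u' (Icc x₀ z) := by
      apply strictAntiOn_of_deriv_neg (convex_Icc _ _)
      · intro x hx
        have hxa : x ∈ Ioi a := lt_of_lt_of_le x₀a hx.1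
        exact (hu' x hxa).continuousAt.continuousWithinAt
      · intro x hx
        rw [interior_Icc] at hx
        have hxa : x ∈ Ioi a := lt_trans x₀a hx.1
        rw [(hu' x hxa).deriv]
        exact hIoo x hx
    have hlt : u' z < u' x₀ :=
      hanti (left_mem_Icc.mpr (le_of_lt hzmem.1)) ⟨le_of_lt hzmem.1, le_refl _⟩ hzmem.1
    have hge := (hsub z (hysub hzmem)).2.1
    linarith
  -- Step 3 : derivative identity
  have hd1 : HasDerivAt (fun x => ρ * u x - b x * u' x - f x)
      (ρ * u' x₀ - (b' x₀ * u' x₀ + b x₀ * u'' x₀) - f' x₀) x₀ :=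
    (((hu x₀ hx₀).const_mul ρ).sub ((hb x₀ x₀pos).mul (hu' x₀ hx₀))).sub (hf x₀ x₀pos)
  have hσct : ContinuousAt σ x₀ := hσcont.continuousAt (Ioi_mem_nhds x₀pos)
  have hd2 : HasDerivAt (fun x => (1/2) * σ x ^ 2 * u'' x)
      ((1/2) * σ x₀ ^ 2 * u''' x₀) x₀ := by
    rw [hasDerivAt_iff_tendsto_slope]
    have h1 : Tendsto (fun x => (1/2) * σ x ^ 2 * slope u'' x₀ x)
        (nhdsWithin x₀ {x₀}ᶜ) (nhds ((1/2) * σ x₀ ^ 2 * u''' x₀)) := by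
      apply Tendsto.mul
      · exact (((hσct.pow 2).const_mul (1/2)) : Filter.Tendsto _ _ _).mono_left nhdsWithin_le_nhds
      · exact hasDerivAt_iff_tendsto_slope.mp (hu'' x₀ hx₀)
    refine h1.congr' ?_
    filter_upwards [self_mem_nhdsWithin] with x hx
    rw [slope_def_field, slope_def_field, hu''0]
    ring
  have heq : (fun x => (1/2) * σ x ^ 2 * u'' x)
      =ᶠ[nhds x₀] (fun x => ρ * u x - b x * u' x - f x) := by
    filter_upwards [Ioi_mem_nhds x₀a] with x hx
    have := hode x hx
    linarith
  have hd2' := hd2.congr_of_eventuallyEq heq.symm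
  have huniq := hd1.unique hd2'
  have hb'lt := hρb x₀ x₀pos
  have hf'p := hf'pos x₀ x₀pos
  have hσp := hσpos x₀ x₀pos
  have hrhs : 0 ≤ (1/2) * σ x₀ ^ 2 * u''' x₀ := by positivity
  rw [hu''0] at huniq
  by_contra hle
  push_neg at hle
  nlinarith [mul_nonneg (le_of_lt (sub_pos.mpr hb'lt)) (neg_nonneg.mpr hle)]
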